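/- Let R be a Noetherian ring of prime characteristic p with connected spectrum. If for every absolutely minimal prime P of R the domain R/P has a weak test element (for tight closure), then R has a weak NE-test element: an element c ∈ R^• such that for all ideals I and all x ∈ I^★, c·x^q ∈ I^[q] for all q ≥ some fixed q'. -/

import Mathlib

/-- The `q`-th Frobenius power of an ideal: the ideal generated by `q`-th powers of elements. -/
def Ideal.frobPow {R : Type*} [CommRing R] (I : Ideal R) (q : ℕ) : Ideal R :=
  Ideal.span ((fun a => a ^ q) '' (I : Set R))

/-- `R°`: the complement of the union of the minimal primes of `R`. -/
def tightMultipliers (R : Type*) [CommRing R] : Set R :=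
  {c | ∀ P ∈ minimalPrimes R, c ∉ P}

/-- The tight closure of an ideal `I` in a ring of characteristic `p`. -/
def tightClosure {R : Type*} [CommRing R] (p : ℕ) (I : Ideal R) : Set R :=
  {x | ∃ c ∈ tightMultipliers R, ∃ q₀ : ℕ, ∀ e : ℕ, q₀ ≤ p ^ e →
    c * x ^ p ^ e ∈ I.frobPow (p ^ e)}

/-- A minimal prime `P` is absolutely minimal if `dim R/P = dim R`. -/
def IsAbsolutelyMinimal {R : Type*} [CommRing R] (P : Ideal R) : Prop :=
  P ∈ minimalPrimes R ∧ ringKrullDim (R ⧸ P) = ringKrullDim R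

/-- `R^•`: the complement of the union of the absolutely minimal primes of `R`. -/
def neMultipliers (R : Type*) [CommRing R] : Set R :=
  {c | ∀ P : Ideal R, IsAbsolutelyMinimal P → c ∉ P}

/-- The NE closure of an ideal `I` in a ring of characteristic `p`. -/
def neClosure {R : Type*} [CommRing R] (p : ℕ) (I : Ideal R) : Set R :=
  {x | ∃ c ∈ neMultipliers R, ∃ q₀ : ℕ, ∀ e : ℕ, q₀ ≤ p ^ e →
    c * x ^ p ^ e ∈ I.frobPow (p ^ e)}

/-- A system of parameters for a Noetherian local ring: `dim R` elements generating an
ideal primary to the maximal ideal. -/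
def IsSOP {R : Type*} [CommRing R] [IsLocalRing R] {n : ℕ} (x : Fin n → R) : Prop :=
  ringKrullDim R = n ∧
    (Ideal.span (Set.range x)).radical = IsLocalRing.maximalIdeal R

/-- A Noetherian local ring is Cohen–Macaulay iff some system of parameters is a
regular sequence. -/
def IsCohenMacaulayLocal (R : Type*) [CommRing R] [IsLocalRing R] : Prop :=
  ∃ (n : ℕ) (x : Fin n → R), IsSOP x ∧ RingTheory.Sequence.IsRegular R (List.ofFn x)

section Aux
variable {R : Type*} [CommRing R]

lemma pow_mem_frobPow {I : Ideal R} {x : R} (hx : x ∈ I) (q : ℕ) :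
    x ^ q ∈ I.frobPow q :=
  Ideal.subset_span ⟨x, hx, rfl⟩

lemma pow_mem_span_image (p : ℕ) (hp : p.Prime) [CharP R p]
    {S : Set R} {y : R} (hy : y ∈ Ideal.span S) (e : ℕ) :
    y ^ p ^ e ∈ Ideal.span ((fun a => a ^ p ^ e) '' S) := by
  haveI : Fact p.Prime := ⟨hp⟩
  induction hy using Submodule.span_induction with
  | mem a ha => exact Ideal.subset_span ⟨a, ha, rfl⟩
  | zero =>
      rw [zero_pow (pow_ne_zero e hp.ne_zero)]
      exact zero_mem _
  | add a b _ _ iha ihb =>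
      rw [add_pow_char_pow]
      exact Ideal.add_mem _ iha ihb
  | smul r a _ iha =>
      rw [smul_eq_mul, mul_pow]
      exact Ideal.mul_mem_left _ _ iha

lemma frobPow_pow (p : ℕ) (hp : p.Prime) [CharP R p] {I : Ideal R} {y : R} {q : ℕ}
    (hy : y ∈ I.frobPow q) (e : ℕ) :
    y ^ p ^ e ∈ I.frobPow (q * p ^ e) := by
  have h := pow_mem_span_image p hp
    (show y ∈ Ideal.span ((fun a => a ^ q) '' (I : Set R)) from hy) e
  have himg : (fun a : R => a ^ p ^ e) '' ((fun a : R => a ^ q) '' (I : Set R))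
      = (fun a : R => a ^ (q * p ^ e)) '' (I : Set R) := by
    rw [Set.image_image]
    exact Set.image_congr fun x _ => by rw [← pow_mul]
  rw [himg] at h
  exact h

lemma map_frobPow_le {S : Type*} [CommRing S] (f : R →+* S) (I : Ideal R) (q : ℕ) :
    Ideal.map f (I.frobPow q) ≤ (Ideal.map f I).frobPow q := by
  have hms : Ideal.map f (I.frobPow q)
      = Ideal.span (f '' ((fun a => a ^ q) '' (I : Set R))) := Ideal.map_span f _
  rw [hms]
  refine Ideal.span_le.2 ?_
  rintro _ ⟨_, ⟨a, ha, rfl⟩, rfl⟩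
  show f (a ^ q) ∈ _
  rw [map_pow]
  exact pow_mem_frobPow (Ideal.mem_map_of_mem f ha) q

lemma frobPow_map_le {S : Type*} [CommRing S] (f : R →+* S) (hf : Function.Surjective f)
    (I : Ideal R) (q : ℕ) :
    (Ideal.map f I).frobPow q ≤ Ideal.map f (I.frobPow q) := by
  show Ideal.span ((fun a => a ^ q) '' (Ideal.map f I : Set S)) ≤ _
  refine Ideal.span_le.2 ?_
  rintro _ ⟨a, ha, rfl⟩
  obtain ⟨b, hb, rfl⟩ := (Ideal.mem_map_iff_of_surjective f hf).1 ha
  show f b ^ q ∈ _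
  rw [← map_pow]
  exact Ideal.mem_map_of_mem f (pow_mem_frobPow hb q)

lemma minimalPrimes_incomp {P Q : Ideal R} (hP : P ∈ minimalPrimes R)
    (hQ : Q ∈ minimalPrimes R) (h : Q ≤ P) : Q = P :=
  le_antisymm h (hP.2 ⟨hQ.1.1, bot_le⟩ h)

lemma exists_d [IsNoetherianRing R] (P : Ideal R) (hP : P ∈ minimalPrimes R) :
    ∃ d : R, d ∉ P ∧ ∀ Q ∈ minimalPrimes R, Q ≠ P → d ∈ Q := by
  classical
  have hfin : (minimalPrimes R).Finite := minimalPrimes.finite_of_isNoetherianRing R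
  set T : Finset (Ideal R) := hfin.toFinset.erase P with hT
  by_cases h : T.inf id ≤ P
  · obtain ⟨Q, hQT, hQP⟩ := (Ideal.IsPrime.inf_le' hP.1.1).1 h
    have hQ : Q ∈ minimalPrimes R := hfin.mem_toFinset.1 (Finset.mem_of_mem_erase hQT)
    exact absurd (minimalPrimes_incomp hP hQ hQP) (Finset.ne_of_mem_erase hQT)
  · obtain ⟨d, hd1, hd2⟩ := Set.not_subset.1 (fun hsub => h (fun x hx => hsub hx))
    refine ⟨d, hd2, fun Q hQ hQP => ?_⟩
    have : T.inf id ≤ Q := Finset.inf_le (by simp [hT, hfin.mem_toFinset, hQ, hQP])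
    exact this hd1

end Aux

theorem stmt_16 {R : Type*} [CommRing R] [IsNoetherianRing R]
    [ConnectedSpace (PrimeSpectrum R)] (p : ℕ) (hp : p.Prime) [CharP R p]
    (htest : ∀ P : Ideal R, IsAbsolutelyMinimal P →
      ∃ (c : R ⧸ P) (q'' : ℕ), c ≠ 0 ∧ ∀ (J : Ideal (R ⧸ P)) (x : R ⧸ P),
        x ∈ tightClosure p J → ∀ e : ℕ, q'' ≤ p ^ e →
          c * x ^ p ^ e ∈ J.frobPow (p ^ e)) :
    ∃ (c : R) (q' : ℕ), c ∈ neMultipliers R ∧ ∀ (I : Ideal R) (x : R),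
      x ∈ neClosure p I → ∀ e : ℕ, q' ≤ p ^ e →
        c * x ^ p ^ e ∈ I.frobPow (p ^ e) := by
  classical
  haveI : Fact p.Prime := ⟨hp⟩
  choose! cbar q'' hne htc using htest
  have hlift : ∀ P : Ideal R, ∃ r : R, Ideal.Quotient.mk P r = cbar P :=
    fun P => Ideal.Quotient.mk_surjective _
  choose cR hcR using hlift
  have hd' : ∀ P : Ideal R, IsAbsolutelyMinimal P →
      ∃ dd : R, dd ∉ P ∧ ∀ Q ∈ minimalPrimes R, Q ≠ P → dd ∈ Q :=
    fun P hP => exists_d P hP.1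
  choose! d hd hdmem using hd'
  obtain ⟨k, hk⟩ := IsNoetherianRing.isNilpotent_nilradical R
  set e₀ := k with he₀
  have hq₀ : k ≤ p ^ e₀ := le_of_lt (Nat.lt_pow_self hp.one_lt : k < p ^ k)
  have hnil : ∀ n : R, (∀ J : Ideal R, J.IsPrime → n ∈ J) → n ^ p ^ e₀ = 0 := by
    intro n hn
    have h1 : n ∈ nilradical R := by
      rw [nilradical_eq_sInf]
      exact Submodule.mem_sInf.2 fun J hJ => hn J hJ
    have h2 : n ^ k = 0 := by
      have h3 := Ideal.pow_mem_pow h1 k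
      rw [hk] at h3
      simpa using h3
    calc n ^ p ^ e₀ = n ^ k * n ^ (p ^ e₀ - k) := by
          rw [← pow_add, Nat.add_sub_cancel' hq₀]
      _ = 0 := by rw [h2, zero_mul]
  have hfinS : {P : Ideal R | IsAbsolutelyMinimal P}.Finite :=
    (minimalPrimes.finite_of_isNoetherianRing R).subset (fun P hP => hP.1)
  set Sfin : Finset (Ideal R) := hfinS.toFinset with hSfin
  set E : ℕ := Sfin.sup q'' with hE
  refine ⟨∑ P ∈ Sfin, (cR P * d P) ^ p ^ e₀, p ^ (e₀ + E), ?_, ?_⟩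
  · -- c ∈ neMultipliers R
    intro Q hQ hcQ
    have hQS : Q ∈ Sfin := hfinS.mem_toFinset.2 hQ
    have hterm : ∀ P ∈ Sfin.erase Q, (cR P * d P) ^ p ^ e₀ ∈ Q := by
      intro P hPT
      have hPS : IsAbsolutelyMinimal P := hfinS.mem_toFinset.1 (Finset.mem_of_mem_erase hPT)
      have hdP : d P ∈ Q := hdmem P hPS Q hQ.1 (Finset.ne_of_mem_erase hPT).symm
      exact Ideal.pow_mem_of_mem Q (Ideal.mul_mem_left _ _ hdP) _ (pow_pos hp.pos e₀)
    have hsum : ∑ P ∈ Sfin.erase Q, (cR P * d P) ^ p ^ e₀ ∈ Q :=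
      Ideal.sum_mem _ hterm
    have hsplit : (cR Q * d Q) ^ p ^ e₀ + ∑ P ∈ Sfin.erase Q, (cR P * d P) ^ p ^ e₀
        = ∑ P ∈ Sfin, (cR P * d P) ^ p ^ e₀ :=
      Finset.add_sum_erase Sfin (fun P => (cR P * d P) ^ p ^ e₀) hQS
    have hQterm : (cR Q * d Q) ^ p ^ e₀ ∈ Q := by
      have h2 := Q.sub_mem hcQ hsum
      rwa [← hsplit, add_sub_cancel_right] at h2
    have hmul : cR Q * d Q ∈ Q := hQ.1.1.1.mem_of_pow_mem _ hQterm
    rcases hQ.1.1.1.mem_or_mem hmul with h | h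
    · exact hne Q hQ (by rw [← hcR Q]; exact Ideal.Quotient.eq_zero_iff_mem.2 h)
    · exact hd Q hQ h
  · -- main containment
    intro I x hx e he
    obtain ⟨c', hc', q₁, hq₁⟩ := hx
    have hee : e₀ + E ≤ e := (Nat.pow_le_pow_iff_right hp.one_lt).1 he
    set e₁ := e - e₀ with he₁
    have heq : e₁ + e₀ = e := by omega
    have hE₁ : E ≤ e₁ := by omega
    have hterm : ∀ P ∈ Sfin, (cR P * d P) ^ p ^ e₀ * x ^ p ^ e ∈ I.frobPow (p ^ e) := by
      intro P hPS
      have hP : IsAbsolutelyMinimal P := hfinS.mem_toFinset.1 hPS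
      haveI hPp : P.IsPrime := hP.1.1.1
      set π := Ideal.Quotient.mk P with hπ
      have hxbar : (π x) ∈ tightClosure p (Ideal.map π I) := by
        refine ⟨π c', ?_, q₁, ?_⟩
        · intro Q hQ hmem
          have hbot : Q ≤ ⊥ := hQ.2 ⟨Ideal.bot_prime, bot_le⟩ bot_le
          exact hc' P hP (Ideal.Quotient.eq_zero_iff_mem.1 (Ideal.mem_bot.1 (hbot hmem)))
        · intro e' he'
          have h1 := hq₁ e' he'
          have h2 : π (c' * x ^ p ^ e') ∈ Ideal.map π (I.frobPow (p ^ e')) :=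
            Ideal.mem_map_of_mem π h1
          have h3 := map_frobPow_le π I (p ^ e') h2
          rwa [map_mul, map_pow] at h3
      have hq'' : q'' P ≤ p ^ e₁ :=
        le_trans (le_trans (Finset.le_sup hPS) (le_of_lt (Nat.lt_pow_self hp.one_lt : E < p ^ E)))
          (Nat.pow_le_pow_right hp.pos hE₁)
      have h4 := htc P hP (Ideal.map π I) (π x) hxbar e₁ hq''
      have h5 : π (cR P * x ^ p ^ e₁) ∈ Ideal.map π (I.frobPow (p ^ e₁)) := by
        apply frobPow_map_le π Ideal.Quotient.mk_surjective
        rw [map_mul, map_pow, hcR P]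
        exact h4
      obtain ⟨y, hy, hyx⟩ :=
        (Ideal.mem_map_iff_of_surjective π Ideal.Quotient.mk_surjective).1 h5
      have hz : cR P * x ^ p ^ e₁ - y ∈ P := Ideal.Quotient.eq.1 hyx.symm
      have hdz : (d P * (cR P * x ^ p ^ e₁ - y)) ^ p ^ e₀ = 0 := by
        refine hnil _ (fun J hJ => ?_)
        obtain ⟨Q, hQmin, hQle⟩ := Ideal.exists_minimalPrimes_le (bot_le : ⊥ ≤ J)
        by_cases hQP : Q = P
        · subst hQP; exact hQle (Ideal.mul_mem_left _ _ hz)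
        · exact hQle (Ideal.mul_mem_right _ _ (hdmem P hP Q hQmin hQP))
      have hkey : (cR P * d P) ^ p ^ e₀ * (x ^ p ^ e₁) ^ p ^ e₀ = (d P * y) ^ p ^ e₀ := by
        rw [← mul_pow]
        have hr : cR P * d P * x ^ p ^ e₁
            = d P * y + d P * (cR P * x ^ p ^ e₁ - y) := by ring
        rw [hr, add_pow_char_pow, hdz, add_zero]
      have h6 : y ^ p ^ e₀ ∈ I.frobPow (p ^ e) := by
        have h7 := frobPow_pow p hp hy e₀
        rwa [← pow_add, heq] at h7
      have hxpow : x ^ p ^ e = (x ^ p ^ e₁) ^ p ^ e₀ := by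
        rw [← pow_mul, ← pow_add, heq]
      rw [hxpow, hkey, mul_pow]
      exact Ideal.mul_mem_left _ _ h6
    rw [Finset.sum_mul]
    exact Ideal.sum_mem _ (fun P hPS => hterm P hPS)
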